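/- The substitutions u(ν) = -(ν⁴+2ν²+5)/(2(ν⁴−6ν²−3)) and n₁(ν) = -16(2ν²−4ν³−4ν+ν⁴−3)/(ν⁴−6ν²−3) satisfy Γ(u, n₁) = 0 identically in ν, where Γ(u,n₁) := −786432u⁴ − 98304n₁u³ − 524288u³ + 393216u² − 16384n₁u² − 3072n₁²u² + 131072u + 24576n₁u + 4096n₁ + 16384 + 256n₁² + n₁⁴. -/

import Mathlib

/-- u(ν), n₁(ν) satisfy Γ(u, n₁) = 0. -/
theorem stmt7 (ν : ℚ) (h : ν ^ 4 - 6 * ν ^ 2 - 3 ≠ 0) :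
    letI u : ℚ := -(ν ^ 4 + 2 * ν ^ 2 + 5) / (2 * (ν ^ 4 - 6 * ν ^ 2 - 3))
    letI n₁ : ℚ := (-16 * (2 * ν ^ 2 - 4 * ν ^ 3 - 4 * ν + ν ^ 4 - 3)
      / (ν ^ 4 - 6 * ν ^ 2 - 3))
    (-786432 * u ^ 4 - 98304 * n₁ * u ^ 3 - 524288 * u ^ 3 + 393216 * u ^ 2
      - 16384 * n₁ * u ^ 2 - 3072 * n₁ ^ 2 * u ^ 2 + 131072 * u
      + 24576 * n₁ * u + 4096 * n₁ + 16384 + 256 * n₁ ^ 2 + n₁ ^ 4 = 0) := by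
  have h' : ν ^ 2 * (ν ^ 2 - 6) - 3 ≠ 0 := by convert h using 1; ring
  field_simp
  ring
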